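/- Let N be a normal subgroup of a finite group G, let θ be an irreducible character of N, and suppose θ extends to an irreducible character θ₀ of G (i.e., the restriction of θ₀ to N equals θ). Then for every irreducible character ψ of G/N, the product θ(1)·ψ(1) is an irreducible character degree of G. -/

import Mathlib

suppress_compilation
set_option linter.unusedSectionVars false

open CategoryTheory CategoryTheory.MonoidalCategory Module Representation FDRep LinearMap

namespace GallagherAux

variable {G : Type} [Group G] [Fintype G]

instance instInvCard : Invertible (Fintype.card G : ℂ) :=
  invertibleOfNonzero (by exact_mod_cast Fintype.card_ne_zero)

lemma avg_trace {V : Type} [AddCommGroup V] [Module ℂ V] [FiniteDimensional ℂ V]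
    (ρ : Representation ℂ G V) :
    ⅟(Fintype.card G : ℂ) • ∑ g : G, LinearMap.trace ℂ V (ρ g) =
      finrank ℂ (invariants ρ) := by
  rw [← (isProj_averageMap ρ).trace]
  simp [GroupAlgebra.average, _root_.map_sum]

lemma finrank_inv_linHom (X Y : FDRep ℂ G) :
    finrank ℂ ((Representation.linHom X.ρ Y.ρ).invariants) = finrank ℂ (X ⟶ Y) :=
  (Representation.linHom.invariantsEquivFDRepHom X Y).finrank_eq

lemma trace_linHom_apply (A B : FDRep ℂ G) (g : G) :
    LinearMap.trace ℂ _ ((Representation.linHom A.ρ B.ρ) g) =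
      A.character g⁻¹ * B.character g :=
  char_linHom A B g

lemma finrank_pos_of_simple (X : FDRep ℂ G) [Simple X] : 0 < finrank ℂ X := by
  rcases Nat.eq_zero_or_pos (finrank ℂ X) with h | h
  · exfalso
    haveI hsub : Subsingleton X := (finrank_zero_iff (R := ℂ) (M := X)).mp h
    apply id_nonzero X
    apply Action.hom_ext
    apply FGModuleCat.hom_ext
    apply LinearMap.ext
    intro x
    exact hsub.elim _ _
  · exact h

lemma exists_equivariant_proj {V : Type} [AddCommGroup V] [Module ℂ V]
    [FiniteDimensional ℂ V] (ρ : Representation ℂ G V) (p : Submodule ℂ V)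
    (hp : ∀ (g : G), ∀ x ∈ p, ρ g x ∈ p) :
    ∃ e : V →ₗ[ℂ] V, LinearMap.IsProj p e ∧ ∀ g : G, e ∘ₗ ρ g = ρ g ∘ₗ e := by
  obtain ⟨q, hq⟩ := Submodule.exists_isCompl p
  set π₀ : V →ₗ[ℂ] V := p.subtype ∘ₗ (p.projectionOnto q hq) with hπ₀
  have hπ₀mem : ∀ x, π₀ x ∈ p := fun x => (p.projectionOnto q hq x).2
  have hπ₀id : ∀ x ∈ p, π₀ x = x := by
    intro x hx
    simp [hπ₀, Submodule.projectionOnto_apply_of_mem_left hq hx]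
  set c : ℂ := (Fintype.card G : ℂ) with hc
  have hc0 : c ≠ 0 := by
    rw [hc]
    exact_mod_cast (Fintype.card_ne_zero : Fintype.card G ≠ 0)
  set e : V →ₗ[ℂ] V := c⁻¹ • ∑ g : G, ρ g ∘ₗ π₀ ∘ₗ ρ g⁻¹ with he
  have hgg : ∀ (g : G) (x : V), ρ g (ρ g⁻¹ x) = x := by
    intro g x
    rw [← Module.End.mul_apply, ← map_mul, mul_inv_cancel, map_one, Module.End.one_apply]
  refine ⟨e, ⟨?_, ?_⟩, ?_⟩
  · intro x
    rw [he]
    simp only [LinearMap.smul_apply, LinearMap.sum_apply, LinearMap.comp_apply]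
    exact Submodule.smul_mem _ _ (Submodule.sum_mem _ fun g _ => hp g _ (hπ₀mem _))
  · intro x hx
    have : ∀ g : G, (ρ g ∘ₗ π₀ ∘ₗ ρ g⁻¹) x = x := by
      intro g
      simp only [LinearMap.comp_apply]
      rw [hπ₀id _ (hp g⁻¹ x hx), hgg]
    rw [he]
    simp only [LinearMap.smul_apply, LinearMap.sum_apply, this, Finset.sum_const,
      Finset.card_univ, smul_smul]
    rw [← Nat.cast_smul_eq_nsmul ℂ, smul_smul, inv_mul_cancel₀ hc0, one_smul]
  · intro h
    ext x
    simp only [LinearMap.comp_apply, he, LinearMap.smul_apply, LinearMap.sum_apply,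
      map_smul, map_sum]
    congr 1
    refine Fintype.sum_equiv (Equiv.mulLeft h⁻¹) _ _ ?_
    intro g
    simp only [Equiv.coe_mulLeft, LinearMap.comp_apply]
    have h1 : (ρ g⁻¹) ((ρ h) x) = (ρ (h⁻¹ * g)⁻¹) x := by
      rw [← Module.End.mul_apply, ← map_mul]
      congr 1
      group
    have h2 : ∀ y, (ρ h) ((ρ (h⁻¹ * g)) y) = (ρ g) y := by
      intro y
      rw [← Module.End.mul_apply, ← map_mul, mul_inv_cancel_left]
    rw [h1, h2]

lemma simple_of_finrank_end_one (V : FDRep ℂ G) (h1 : finrank ℂ (V ⟶ V) = 1)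
    (hpos : 0 < finrank ℂ V) : Simple V := by
  have hVnt : Nontrivial V := Module.nontrivial_of_finrank_pos hpos
  obtain ⟨v₀, hv₀⟩ := exists_ne (0 : V)
  have hid : (𝟙 V : V ⟶ V) ≠ 0 := by
    intro h
    have := LinearMap.congr_fun (congrArg (fun t => t.hom.hom.hom) h) v₀
    exact hv₀ this
  constructor
  intro Y f hf
  constructor
  · intro hiso h0
    apply hid
    rw [← IsIso.inv_hom_id f]
    exact (congrArg (fun t => inv f ≫ t) h0).trans Limits.comp_zero
  · intro hf0
    have fhom0 : f.hom ≠ 0 := fun h => hf0 (Action.hom_ext f 0 h)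
    -- injectivity
    have hker : LinearMap.ker (f.hom.hom.hom : Y →ₗ[ℂ] V) = ⊥ := by
      by_contra hK
      obtain ⟨x, hxK, hx0⟩ := Submodule.exists_mem_ne_zero_of_ne_bot hK
      set K := LinearMap.ker (f.hom.hom.hom : Y →ₗ[ℂ] V)
      have hinv : ∀ g : G, ∀ y ∈ K, Y.ρ g y ∈ K := by
        intro g y hy
        have h7 : f.hom.hom.hom (Y.ρ g y) = V.ρ g (f.hom.hom.hom y) := LinearMap.congr_fun (congrArg (fun t => t.hom.hom) (f.comm g)) y
        have hy' : f.hom.hom.hom y = 0 := hy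
        show f.hom.hom.hom (Y.ρ g y) = 0
        rw [h7, hy', map_zero]
      let ρK : Representation ℂ G K :=
        { toFun := fun g => (Y.ρ g).restrict (hinv g)
          map_one' := by
            apply LinearMap.ext; intro z; apply Subtype.ext
            simp only [LinearMap.restrict_coe_apply, map_one, Module.End.one_apply]
          map_mul' := fun g h => by
            apply LinearMap.ext; intro z; apply Subtype.ext
            show Y.ρ (g * h) (z : ↥Y.V) = Y.ρ g (Y.ρ h (z : ↥Y.V))
            rw [map_mul]
            rfl }
      let Z : FDRep ℂ G := FDRep.of ρK
      let j : Z ⟶ Y := ⟨FGModuleCat.ofHom (K.subtype : ↥K →ₗ[ℂ] Y), fun g => by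
        apply FGModuleCat.hom_ext; apply LinearMap.ext; intro z; rfl⟩
      have hjf : j ≫ f = 0 := by
        apply Action.hom_ext
        apply FGModuleCat.hom_ext
        apply LinearMap.ext
        intro z
        exact z.2
      have hj0 : j = 0 := by
        rw [← cancel_mono f, hjf, Limits.zero_comp]
      have := LinearMap.congr_fun (congrArg (fun t => t.hom.hom.hom) hj0) ⟨x, hxK⟩
      exact hx0 this
    have hinj : Function.Injective (f.hom.hom.hom : Y →ₗ[ℂ] V) := LinearMap.ker_eq_bot.mp hker
    -- surjectivity
    set p := LinearMap.range (f.hom.hom.hom : Y →ₗ[ℂ] V) with hpdef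
    have hpinv : ∀ g : G, ∀ x ∈ p, V.ρ g x ∈ p := by
      rintro g x ⟨y, rfl⟩
      have hcg : f.hom.hom.hom (Y.ρ g y) = V.ρ g (f.hom.hom.hom y) := LinearMap.congr_fun (congrArg (fun t => t.hom.hom) (f.comm g)) y
      exact ⟨Y.ρ g y, hcg⟩
    obtain ⟨e, hproj, hcomm⟩ := exists_equivariant_proj V.ρ p hpinv
    let E : V ⟶ V := ⟨FGModuleCat.ofHom e, fun g => by
      apply FGModuleCat.hom_ext; apply LinearMap.ext; intro v
      exact LinearMap.congr_fun (hcomm g) v⟩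
    obtain ⟨c, hc⟩ := (finrank_eq_one_iff_of_nonzero' (𝟙 V) hid).mp h1 E
    obtain ⟨y₁, hy₁⟩ : ∃ y, f.hom.hom.hom y ≠ 0 := by
      by_contra h
      push_neg at h
      exact fhom0 (FGModuleCat.hom_ext (LinearMap.ext h))
    have hx₁p : f.hom.hom.hom y₁ ∈ p := ⟨y₁, rfl⟩
    have hex : e (f.hom.hom.hom y₁) = f.hom.hom.hom y₁ := hproj.2 _ hx₁p
    have hEhom : E.hom.hom.hom = c • LinearMap.id := by
      rw [← hc]; rfl
    have hc1 : c = 1 := by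
      have h2 : c • f.hom.hom.hom y₁ = f.hom.hom.hom y₁ := by
        have h9 : E.hom.hom.hom (f.hom.hom.hom y₁) = c • (f.hom.hom.hom y₁) := by
          rw [hEhom]; rfl
        rw [← h9]
        exact hex
      have h3 : (c - 1) • f.hom.hom.hom y₁ = 0 := by
        rw [sub_smul, one_smul, h2, sub_self]
      rcases smul_eq_zero.mp h3 with h4 | h4
      · exact sub_eq_zero.mp h4
      · exact absurd h4 hy₁
    have hsurj : Function.Surjective (f.hom.hom.hom : Y →ₗ[ℂ] V) := by
      rw [← LinearMap.range_eq_top]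
      rw [eq_top_iff]
      intro v _
      have hev : e v = v := by
        have h10 : E.hom.hom.hom v = c • v := by rw [hEhom]; rfl
        rw [hc1, one_smul] at h10
        exact h10
      rw [← hev]
      exact hproj.1 v
    let eqv := LinearEquiv.ofBijective (f.hom.hom.hom : Y →ₗ[ℂ] V) ⟨hinj, hsurj⟩
    have hsymcomm : ∀ g : G, ∀ v : V, eqv.symm (V.ρ g v) = Y.ρ g (eqv.symm v) := by
      intro g v
      apply hinj
      have h5 : f.hom.hom.hom (eqv.symm (V.ρ g v)) = V.ρ g v := eqv.apply_symm_apply _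
      have h6 : f.hom.hom.hom (Y.ρ g (eqv.symm v)) = V.ρ g (f.hom.hom.hom (eqv.symm v)) :=
        LinearMap.congr_fun (congrArg (fun t => t.hom.hom) (f.comm g)) _
      rw [h5, h6, show f.hom.hom.hom (eqv.symm v) = v from eqv.apply_symm_apply v]
    let ginv : V ⟶ Y := ⟨FGModuleCat.ofHom (eqv.symm.toLinearMap : V →ₗ[ℂ] Y), fun g => by
      apply FGModuleCat.hom_ext; apply LinearMap.ext; intro v
      exact hsymcomm g v⟩
    exact ⟨⟨ginv, Action.hom_ext _ _ (FGModuleCat.hom_ext (LinearMap.ext fun y => eqv.symm_apply_apply y)),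
      Action.hom_ext _ _ (FGModuleCat.hom_ext (LinearMap.ext fun v => eqv.apply_symm_apply v))⟩⟩

lemma linHom_self_id {X : Type} [AddCommGroup X] [Module ℂ X]
    (ρ : Representation ℂ G X) (g : G) :
    (Representation.linHom ρ ρ) g LinearMap.id = LinearMap.id := by
  show ρ g ∘ₗ LinearMap.id ∘ₗ ρ g⁻¹ = LinearMap.id
  apply LinearMap.ext; intro x
  show ρ g (ρ g⁻¹ x) = x
  rw [← Module.End.mul_apply, ← map_mul, mul_inv_cancel, map_one, Module.End.one_apply]

/-- Composition of a representation with a group hom. -/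
def compRep {H : Type} [Group H] {X : Type} [AddCommGroup X] [Module ℂ X]
    (ρ : Representation ℂ G X) (f : H →* G) : Representation ℂ H X :=
  ρ.comp f

@[simp] lemma compRep_apply {H : Type} [Group H] {X : Type} [AddCommGroup X] [Module ℂ X]
    (ρ : Representation ℂ G X) (f : H →* G) (h : H) : compRep ρ f h = ρ (f h) := rfl

lemma claimC (N : Subgroup G) [Fintype ↥N] (θ₀ : FDRep ℂ G) (hnt : Nontrivial θ₀)
    (hinv1 : finrank ℂ ((compRep (Representation.linHom θ₀.ρ θ₀.ρ) N.subtype).invariants) = 1)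
    (g : G) :
    ∑ n : ↥N, LinearMap.trace ℂ _ ((Representation.linHom θ₀.ρ θ₀.ρ) (g * ↑n)) =
      (Fintype.card ↥N : ℂ) := by
  set ρE := Representation.linHom θ₀.ρ θ₀.ρ with hρE
  set σ := compRep ρE N.subtype with hσ
  have hidmem : (LinearMap.id : θ₀ →ₗ[ℂ] θ₀) ∈ σ.invariants := by
    intro n
    exact linHom_self_id θ₀.ρ ↑n
  have hidne : (LinearMap.id : θ₀ →ₗ[ℂ] θ₀) ≠ 0 := by
    obtain ⟨x, hx⟩ := exists_ne (0 : θ₀)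
    intro h
    exact hx (LinearMap.congr_fun h x)
  have hspan : σ.invariants = Submodule.span ℂ {(LinearMap.id : θ₀ →ₗ[ℂ] θ₀)} := by
    symm
    apply Submodule.eq_of_le_of_finrank_le
    · rw [Submodule.span_le, Set.singleton_subset_iff]; exact hidmem
    · rw [hinv1, finrank_span_singleton hidne]
  -- average map of σ
  set P := σ.averageMap with hP
  have hPfix : ∀ f, ρE g (P f) = P f := by
    intro f
    have h1 : P f ∈ σ.invariants := σ.averageMap_invariant f
    rw [hspan, Submodule.mem_span_singleton] at h1
    obtain ⟨c, hc⟩ := h1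
    rw [← hc, map_smul, linHom_self_id]
  have hcomp : (ρE g) ∘ₗ P = P := LinearMap.ext hPfix
  have hPdef : P = ⅟(Fintype.card ↥N : ℂ) • ∑ n : ↥N, σ n := by
    rw [hP]
    show Representation.asAlgebraHom σ (GroupAlgebra.average ℂ ↥N) = _
    rw [GroupAlgebra.average, map_smul, _root_.map_sum]
    congr 1
    apply Finset.sum_congr rfl
    intro n _
    exact Representation.asAlgebraHom_single_one σ n
  have hsum' : (∑ n : ↥N, σ n) = (Fintype.card ↥N : ℂ) • P := by
    rw [hPdef, smul_smul, mul_invOf_self, one_smul]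
  calc ∑ n : ↥N, LinearMap.trace ℂ _ (ρE (g * ↑n))
      = LinearMap.trace ℂ _ (∑ n : ↥N, (ρE g) ∘ₗ (σ n)) := by
        rw [_root_.map_sum]
        apply Finset.sum_congr rfl
        intro n _
        congr 1
        rw [map_mul ρE g ↑n]
        rfl
    _ = LinearMap.trace ℂ _ ((ρE g) ∘ₗ ∑ n : ↥N, σ n) := by
        congr 1
        apply LinearMap.ext; intro f
        simp
    _ = (Fintype.card ↥N : ℂ) * LinearMap.trace ℂ _ ((ρE g) ∘ₗ P) := by
        rw [hsum', LinearMap.comp_smul, map_smul, smul_eq_mul]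
    _ = (Fintype.card ↥N : ℂ) := by
        rw [hcomp]
        have ht := (Representation.isProj_averageMap σ).trace
        rw [ht, hinv1]
        simp


end GallagherAux

open GallagherAux

/-- The set of degrees of irreducible complex characters of a finite group. -/
noncomputable def cd (G : Type) [Group G] [Fintype G] : Set ℕ :=
  {n | ∃ V : FDRep ℂ G, CategoryTheory.Simple V ∧ Module.finrank ℂ V = n}

/-- Gallagher's theorem (degree consequence): if N ⊴ G, θ ∈ Irr(N) extends to
θ₀ ∈ Irr(G), then for every ψ ∈ Irr(G/N), θ(1)·ψ(1) ∈ cd(G). -/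
theorem gallagher_degrees {G : Type} [Group G] [Fintype G]
    (N : Subgroup G) (hN : N.Normal)
    (θ : FDRep ℂ N) (hθ : CategoryTheory.Simple θ)
    (θ₀ : FDRep ℂ G) (hθ₀ : CategoryTheory.Simple θ₀)
    (hext : ∀ n : N, θ₀.character (n : G) = θ.character n)
    (ψ : FDRep ℂ (G ⧸ N)) (hψ : CategoryTheory.Simple ψ) :
    Module.finrank ℂ θ * Module.finrank ℂ ψ ∈ cd G := by
  haveI := hN
  letI : Fintype ↥N := Fintype.ofFinite _
  letI : Fintype (G ⧸ N) := Fintype.ofFinite _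
  classical
  -- dimensions
  have hdim0 : finrank ℂ θ₀ = finrank ℂ θ := by
    have h := hext 1
    rw [OneMemClass.coe_one, FDRep.char_one, FDRep.char_one] at h
    exact_mod_cast h
  have hθpos : 0 < finrank ℂ θ := finrank_pos_of_simple θ
  have hψpos : 0 < finrank ℂ ψ := finrank_pos_of_simple ψ
  have hnt0 : Nontrivial θ₀ :=
    Module.nontrivial_of_finrank_pos (hdim0 ▸ hθpos : 0 < finrank ℂ θ₀)
  -- the inflation of ψ to G
  set τ : Representation ℂ G ψ := compRep ψ.ρ (QuotientGroup.mk' N) with hτ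
  set Ψ : FDRep ℂ G := FDRep.of τ with hΨ
  set V : FDRep ℂ G := θ₀ ⊗ Ψ with hV
  -- Step A : restriction of θ₀ to N has 1-dimensional endomorphism invariants
  have hA : finrank ℂ ((compRep (Representation.linHom θ₀.ρ θ₀.ρ) N.subtype).invariants) = 1 := by
    have h1 : ⅟(Fintype.card ↥N : ℂ) •
        ∑ n : ↥N, LinearMap.trace ℂ _ ((compRep (Representation.linHom θ₀.ρ θ₀.ρ) N.subtype) n)
        = finrank ℂ ((compRep (Representation.linHom θ₀.ρ θ₀.ρ) N.subtype).invariants) :=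
      avg_trace _
    have h2 : ⅟(Fintype.card ↥N : ℂ) •
        ∑ n : ↥N, LinearMap.trace ℂ _ ((Representation.linHom θ.ρ θ.ρ) n)
        = finrank ℂ ((Representation.linHom θ.ρ θ.ρ).invariants) := avg_trace _
    have hsame : ∀ n : ↥N,
        LinearMap.trace ℂ _ ((compRep (Representation.linHom θ₀.ρ θ₀.ρ) N.subtype) n) =
        LinearMap.trace ℂ _ ((Representation.linHom θ.ρ θ.ρ) n) := by
      intro n
      rw [compRep_apply]
      rw [show N.subtype n = ((n : G)) from rfl]
      rw [trace_linHom_apply θ₀ θ₀ ((n : G)), trace_linHom_apply θ θ n]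
      rw [show ((↑n : G)⁻¹) = ((↑(n⁻¹) : G)) from rfl, hext (n⁻¹), hext n]
    rw [Finset.sum_congr rfl (fun n _ => hsame n)] at h1
    rw [h2] at h1
    have h3 : finrank ℂ ((Representation.linHom θ.ρ θ.ρ).invariants) = 1 := by
      rw [finrank_inv_linHom θ θ]
      exact finrank_endomorphism_simple_eq_one ℂ θ
    have h4 := h1.symm.trans (congrArg _ h3)
    exact_mod_cast h4
  -- characters of the inflation
  have hΨchar : ∀ g : G, Ψ.character g = ψ.character (QuotientGroup.mk' N g) := fun g => rfl
  -- invariants of linHom τ τ = invariants of linHom ψ.ρ ψ.ρ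
  have hlh : ∀ g : G, (Representation.linHom τ τ) g =
      (Representation.linHom ψ.ρ ψ.ρ) (QuotientGroup.mk' N g) := by
    intro g
    apply LinearMap.ext; intro f
    show τ g ∘ₗ f ∘ₗ τ g⁻¹ = ψ.ρ (QuotientGroup.mk' N g) ∘ₗ f ∘ₗ ψ.ρ (QuotientGroup.mk' N g)⁻¹
    rw [hτ, compRep_apply, compRep_apply, map_inv]
  have hinveq : (Representation.linHom τ τ).invariants =
      (Representation.linHom ψ.ρ ψ.ρ).invariants := by
    apply Submodule.ext
    intro f
    simp only [Representation.mem_invariants]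
    constructor
    · intro h t
      obtain ⟨g, rfl⟩ := QuotientGroup.mk'_surjective N t
      rw [← hlh]
      exact h g
    · intro h g
      rw [hlh]
      exact h _
  -- sum of |ψ character|² over G equals |G|
  have hψsum : ∑ g : G, LinearMap.trace ℂ _ ((Representation.linHom τ τ) g)
      = (Fintype.card G : ℂ) := by
    have h1 : ⅟(Fintype.card G : ℂ) •
        ∑ g : G, LinearMap.trace ℂ _ ((Representation.linHom τ τ) g)
        = finrank ℂ ((Representation.linHom τ τ).invariants) := avg_trace _
    rw [hinveq] at h1
    have h3 : finrank ℂ ((Representation.linHom ψ.ρ ψ.ρ).invariants) = 1 := by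
      rw [finrank_inv_linHom ψ ψ]
      exact finrank_endomorphism_simple_eq_one ℂ ψ
    rw [h3] at h1
    calc ∑ g : G, LinearMap.trace ℂ _ ((Representation.linHom τ τ) g)
        = (Fintype.card G : ℂ) • (⅟(Fintype.card G : ℂ) •
            ∑ g : G, LinearMap.trace ℂ _ ((Representation.linHom τ τ) g)) := by
          rw [smul_smul, mul_invOf_self, one_smul]
      _ = (Fintype.card G : ℂ) := by rw [h1]; simp
  -- main sum computation
  have hcNne : (Fintype.card ↥N : ℂ) ≠ 0 := by exact_mod_cast Fintype.card_ne_zero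
  set A : G → ℂ := fun g =>
    LinearMap.trace ℂ _ ((Representation.linHom θ₀.ρ θ₀.ρ) g) with hAdef
  set B : G → ℂ := fun g =>
    LinearMap.trace ℂ _ ((Representation.linHom τ τ) g) with hBdef
  have hBval : ∀ g : G, B g = Ψ.character g⁻¹ * Ψ.character g := fun g =>
    trace_linHom_apply Ψ Ψ g
  have hBcoset : ∀ (g : G) (n : ↥N), B (g * ↑n) = B g := by
    intro g n
    show LinearMap.trace ℂ _ ((Representation.linHom τ τ) (g * ↑n)) =
      LinearMap.trace ℂ _ ((Representation.linHom τ τ) g)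
    rw [hlh (g * ↑n), hlh g]
    congr 2
    rw [map_mul, mul_eq_left]
    show ((↑n : G) : G ⧸ N) = 1
    exact (QuotientGroup.eq_one_iff (↑n : G)).mpr n.2
  have hterm : ∀ g : G, LinearMap.trace ℂ _ ((Representation.linHom V.ρ V.ρ) g)
      = A g * B g := by
    intro g
    have h1 := trace_linHom_apply V V g
    have h2 : ∀ x : G, V.character x = θ₀.character x * Ψ.character x := by
      intro x
      rw [hV, FDRep.char_tensor]
      rfl
    have h3 : A g = θ₀.character g⁻¹ * θ₀.character g := trace_linHom_apply θ₀ θ₀ g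
    rw [h1, h2, h2, h3, hBval]
    ring
  have hclaim := claimC N θ₀ hnt0 hA
  have hinner : ∀ g : G, ∑ n : ↥N, A (g * ↑n) * B (g * ↑n) = (Fintype.card ↥N : ℂ) * B g := by
    intro g
    calc ∑ n : ↥N, A (g * ↑n) * B (g * ↑n)
        = ∑ n : ↥N, A (g * ↑n) * B g :=
          Finset.sum_congr rfl fun n _ => by rw [hBcoset g n]
      _ = (∑ n : ↥N, A (g * ↑n)) * B g := by rw [Finset.sum_mul]
      _ = (Fintype.card ↥N : ℂ) * B g := by rw [hclaim g]
  have reidx : ∀ n : ↥N, ∑ g : G, A (g * ↑n) * B (g * ↑n) = ∑ g : G, A g * B g := by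
    intro n
    exact Fintype.sum_equiv (Equiv.mulRight (↑n : G))
      (fun g => A (g * ↑n) * B (g * ↑n)) (fun g => A g * B g) (fun g => rfl)
  have hmain : ∑ g : G, LinearMap.trace ℂ _ ((Representation.linHom V.ρ V.ρ) g)
      = (Fintype.card G : ℂ) := by
    have hAB : ∑ g : G, A g * B g = ∑ g : G, B g := by
      apply mul_left_cancel₀ hcNne
      calc (Fintype.card ↥N : ℂ) * ∑ g : G, A g * B g
          = ∑ n : ↥N, ∑ g : G, A g * B g := by
            rw [Finset.sum_const, Finset.card_univ, nsmul_eq_mul]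
        _ = ∑ n : ↥N, ∑ g : G, A (g * ↑n) * B (g * ↑n) :=
            Finset.sum_congr rfl fun n _ => (reidx n).symm
        _ = ∑ g : G, ∑ n : ↥N, A (g * ↑n) * B (g * ↑n) := Finset.sum_comm
        _ = ∑ g : G, (Fintype.card ↥N : ℂ) * B g :=
            Finset.sum_congr rfl fun g _ => hinner g
        _ = (Fintype.card ↥N : ℂ) * ∑ g : G, B g := by rw [Finset.mul_sum]
    calc ∑ g : G, LinearMap.trace ℂ _ ((Representation.linHom V.ρ V.ρ) g)
        = ∑ g : G, A g * B g := Finset.sum_congr rfl fun g _ => hterm g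
      _ = ∑ g : G, B g := hAB
      _ = (Fintype.card G : ℂ) := hψsum
  -- End(V) is 1-dimensional
  have hEnd : finrank ℂ (V ⟶ V) = 1 := by
    have h1 : ⅟(Fintype.card G : ℂ) •
        ∑ g : G, LinearMap.trace ℂ _ ((Representation.linHom V.ρ V.ρ) g)
        = finrank ℂ ((Representation.linHom V.ρ V.ρ).invariants) := avg_trace _
    rw [hmain, finrank_inv_linHom V V] at h1
    have : ((finrank ℂ (V ⟶ V) : ℂ)) = 1 := by
      rw [← h1, invOf_smul_eq_iff]
      simp
    exact_mod_cast this
  -- dimension of V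
  have hdimV : finrank ℂ V = finrank ℂ θ * finrank ℂ ψ := by
    have : finrank ℂ V = finrank ℂ θ₀ * finrank ℂ Ψ := by
      show finrank ℂ (TensorProduct ℂ θ₀ Ψ) = _
      exact finrank_tensorProduct
    rw [this, hdim0]
  have hVpos : 0 < finrank ℂ V := by
    rw [hdimV]
    exact Nat.mul_pos hθpos hψpos
  haveI : Simple V := simple_of_finrank_end_one V hEnd hVpos
  exact ⟨V, inferInstance, hdimV⟩
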